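/- Let A be a commutative ring and M a Noetherian A-module of Krull dimension ≤ α (every associated prime of M has coheight ≤ α), written as a composite extension of modules A/𝒬_i with 𝒬_i primes. Then for any prime 𝒫 of coheight α, the localized module M ⊗_A A_𝒫 has finite length over A_𝒫. -/

import Mathlib

universe u

/-- The ordinal-valued coheight of a prime ideal of a Noetherian ring:
`coht 𝒫 = sup { coht 𝒬 + 1 : 𝒬 prime, 𝒬 ⊋ 𝒫 }`, defined by well-founded recursion. -/
noncomputable def coht {A : Type u} [CommRing A] [IsNoetherianRing A]
    (p : PrimeSpectrum A) : Ordinal :=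
  haveI : WellFoundedGT (PrimeSpectrum A) :=
    (show StrictMono (PrimeSpectrum.asIdeal (R := A)) from fun _ _ h => h).wellFoundedGT
  IsWellFounded.rank (α := PrimeSpectrum A) (· > ·) p

lemma coht_lt_of_lt {A : Type u} [CommRing A] [IsNoetherianRing A]
    {x y : PrimeSpectrum A} (h : x < y) : coht y < coht x := by
  haveI : WellFoundedGT (PrimeSpectrum A) :=
    (show StrictMono (PrimeSpectrum.asIdeal (R := A)) from fun _ _ h => h).wellFoundedGT
  exact IsWellFounded.rank_lt_of_rel (r := ((· > ·) : PrimeSpectrum A → PrimeSpectrum A → Prop)) h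

/-- A finite module killed by a maximal ideal is Artinian. -/
lemma isArtinian_of_isTorsionBySet_maximal {R : Type u} [CommRing R]
    (m : Ideal R) [m.IsMaximal] (V : Type u) [AddCommGroup V] [Module R V]
    [Module.Finite R V] (htor : Module.IsTorsionBySet R V (m : Set R)) :
    IsArtinian R V := by
  letI : Module (R ⧸ m) V := htor.module
  haveI : IsScalarTower R (R ⧸ m) V := htor.isScalarTower
  haveI : Module.Finite (R ⧸ m) V :=
    Module.Finite.of_restrictScalars_finite R (R ⧸ m) V
  haveI : IsArtinianRing (R ⧸ m) := by
    letI : Field (R ⧸ m) := Ideal.Quotient.field m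
    exact inferInstance
  haveI hartk : IsArtinian (R ⧸ m) V := isArtinian_of_fg_of_artinian'
  rw [isArtinian_iff]
  let g : Submodule R V → Submodule (R ⧸ m) V := fun W =>
    { carrier := W
      add_mem' := fun ha hb => W.add_mem ha hb
      zero_mem' := W.zero_mem
      smul_mem' := by
        rintro c x hx
        obtain ⟨a, rfl⟩ := Ideal.Quotient.mk_surjective c
        show (Ideal.Quotient.mk m a) • x ∈ W
        rw [htor.mk_smul]
        exact W.smul_mem a hx }
  have hg : ∀ W₁ W₂ : Submodule R V, W₁ < W₂ → g W₁ < g W₂ := by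
    intro W₁ W₂ h
    rw [SetLike.lt_iff_le_and_exists] at h ⊢
    exact ⟨fun x hx => h.1 hx, h.2⟩
  exact Subrelation.wf (fun {W₁ W₂} h => hg _ _ h)
    (InvImage.wf g ((isArtinian_iff _ _).mp hartk))

/-- A finite module over a Noetherian ring killed by a power of a maximal ideal is Artinian. -/
lemma isArtinian_of_pow_maximal_smul_eq_bot {R : Type u} [CommRing R] [IsNoetherianRing R]
    (m : Ideal R) [m.IsMaximal] :
    ∀ (n : ℕ) (N : Type u) [AddCommGroup N] [Module R N] [Module.Finite R N],
      m ^ n • (⊤ : Submodule R N) = ⊥ → IsArtinian R N := by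
  intro n
  induction n with
  | zero =>
    intro N _ _ _ h
    rw [pow_zero, Ideal.one_eq_top, Submodule.top_smul] at h
    have hz : ∀ a : N, a = 0 := fun a => (Submodule.mem_bot R).mp (h ▸ Submodule.mem_top)
    haveI : Subsingleton N := subsingleton_of_forall_eq 0 fun a => hz a
    exact isArtinian_of_finite
  | succ n ih =>
    intro N _ _ _ h
    set N' : Submodule R N := m • ⊤ with hN'
    have hbot : m ^ n • N' = (⊥ : Submodule R N) := by
      rw [hN', ← Submodule.smul_assoc, smul_eq_mul, ← pow_succ]
      exact h
    haveI hfgN' : Module.Finite R N' := Module.Finite.iff_fg.mpr (IsNoetherian.noetherian N')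
    have hkill : m ^ n • (⊤ : Submodule R N') = ⊥ := by
      rw [eq_bot_iff]
      refine Submodule.smul_le.mpr fun r hr x _ => ?_
      rw [Submodule.mem_bot]
      have hx : (x : N) ∈ N' := x.2
      have h0 : r • (x : N) ∈ m ^ n • N' := Submodule.smul_mem_smul hr hx
      rw [hbot, Submodule.mem_bot] at h0
      exact Subtype.ext (by simpa using h0)
    have hart1 : IsArtinian R N' := ih N' hkill
    have htor : Module.IsTorsionBySet R (N ⧸ N') (m : Set R) := by
      intro x a
      obtain ⟨y, rfl⟩ := N'.mkQ_surjective x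
      have hy : (a : R) • y ∈ N' := hN' ▸ Submodule.smul_mem_smul a.2 Submodule.mem_top
      show (a : R) • Submodule.Quotient.mk y = 0
      rw [← Submodule.Quotient.mk_smul, Submodule.Quotient.mk_eq_zero]
      exact hy
    have hart2 : IsArtinian R (N ⧸ N') :=
      isArtinian_of_isTorsionBySet_maximal m (N ⧸ N') htor
    exact (isArtinian_iff_submodule_quotient N').mpr ⟨hart1, hart2⟩

/-- If a prime `q` contains the annihilator of a finite module `M` over a Noetherian ring,
then there is an associated prime of `M` contained in `q`. -/
lemma exists_associated_le {A : Type u} [CommRing A] [IsNoetherianRing A]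
    (M : Type u) [AddCommGroup M] [Module A M] [Module.Finite A M]
    (q : Ideal A) [hqp : q.IsPrime] (hq : Module.annihilator A M ≤ q) :
    ∃ q' ∈ associatedPrimes A M, q' ≤ q := by
  classical
  set Aq := Localization.AtPrime q
  set Mq := LocalizedModule q.primeCompl M
  haveI : IsNoetherianRing Aq := IsLocalization.isNoetherianRing q.primeCompl Aq inferInstance
  haveI : Nontrivial Mq := by
    have : (⟨q, hqp⟩ : PrimeSpectrum A) ∈ Module.support A M :=
      (Module.mem_support_iff_of_finite).mpr hq
    exact this
  obtain ⟨Q, hQ⟩ := associatedPrimes.nonempty Aq Mq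
  obtain ⟨hQp, x, hx⟩ := (isAssociatedPrime_iff).mp hQ
  obtain ⟨mm, s, rfl⟩ : ∃ (mm : M) (s : q.primeCompl), x = LocalizedModule.mk mm s := by
    induction x using LocalizedModule.induction_on with | _ mm s => exact ⟨mm, s, rfl⟩
  set q' := Q.comap (algebraMap A Aq) with hq'
  haveI hq'prime : q'.IsPrime := Ideal.IsPrime.comap _
  have hq'le : q' ≤ q := by
    intro a ha
    by_contra hnot
    exact hQp.ne_top (Ideal.eq_top_of_isUnit_mem _ ha
      (IsLocalization.map_units Aq (⟨a, hnot⟩ : q.primeCompl)))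
  -- membership criterion for `q'`
  have key : ∀ a : A, a ∈ q' ↔ ∃ u : q.primeCompl, u • (a • mm) = 0 := by
    intro a
    have hsm : (algebraMap A Aq a) • LocalizedModule.mk mm s
        = LocalizedModule.mk (a • mm) s := by
      rw [algebraMap_smul, LocalizedModule.smul'_mk]
    rw [hq', Ideal.mem_comap, hx, Submodule.mem_colon_singleton, Submodule.mem_bot, hsm]
    rw [← LocalizedModule.zero_mk (1 : q.primeCompl), LocalizedModule.mk_eq]
    constructor
    · rintro ⟨u, hu⟩
      refine ⟨u, ?_⟩
      simpa using hu
    · rintro ⟨u, hu⟩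
      exact ⟨u, by simpa using hu⟩
  obtain ⟨T, hT⟩ : q'.FG := IsNoetherian.noetherian q'
  choose u hu using fun a : {y // y ∈ T} =>
    (key a.1).mp (hT ▸ Submodule.subset_span a.2)
  set t : q.primeCompl := ∏ a ∈ T.attach, u a with ht
  refine ⟨q', (isAssociatedPrime_iff).mpr ⟨hq'prime, (t : A) • mm, ?_⟩, hq'le⟩
  apply le_antisymm
  · -- q' ≤ annihilator of span
    rw [← hT, Ideal.span_le]
    intro a ha
    rw [SetLike.mem_coe, Submodule.mem_colon_singleton, Submodule.mem_bot]
    have hta : (t : A) = (u ⟨a, ha⟩ : A) * ∏ y ∈ T.attach.erase ⟨a, ha⟩, (u y : A) := by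
      rw [ht]
      push_cast
      exact (Finset.mul_prod_erase T.attach (fun y => (u y : A)) (Finset.mem_attach T ⟨a, ha⟩)).symm
    have hu' : (u ⟨a, ha⟩ : A) • a • mm = 0 := by
      have := hu ⟨a, ha⟩
      rwa [Submonoid.smul_def] at this
    calc a • (t : A) • mm
        = (∏ y ∈ T.attach.erase ⟨a, ha⟩, (u y : A)) • (u ⟨a, ha⟩ : A) • a • mm := by
          rw [smul_smul, smul_smul, smul_smul, hta]; ring_nf
      _ = 0 := by rw [hu', smul_zero]
  · -- annihilator of span ≤ q'
    intro a ha
    rw [Submodule.mem_colon_singleton, Submodule.mem_bot] at ha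
    refine (key a).mpr ⟨t, ?_⟩
    rw [Submonoid.smul_def, smul_comm]
    exact ha

/-- If `M` is a Noetherian module of Krull dimension `≤ α` (every associated prime has
coheight `≤ α`) and `𝒫` is a prime of coheight `α`, then the localization `M ⊗ A_𝒫`
has finite length over `A_𝒫`. -/
theorem isFiniteLength_localizedModule_of_krullDim_le
    (A : Type u) [CommRing A] [IsNoetherianRing A]
    (M : Type u) [AddCommGroup M] [Module A M] [Module.Finite A M]
    (α : Ordinal) (hM : ∀ q : PrimeSpectrum A, q.asIdeal ∈ associatedPrimes A M → coht q ≤ α)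
    (p : PrimeSpectrum A) (hp : coht p = α) :
    IsFiniteLength (Localization.AtPrime p.asIdeal)
      (LocalizedModule p.asIdeal.primeCompl M) := by
  set R' := Localization.AtPrime p.asIdeal
  set M' := LocalizedModule p.asIdeal.primeCompl M
  haveI : IsNoetherianRing R' :=
    IsLocalization.isNoetherianRing p.asIdeal.primeCompl R' inferInstance
  haveI : Module.Finite R' M' :=
    Module.Finite.of_isLocalizedModule p.asIdeal.primeCompl
      (LocalizedModule.mkLinearMap p.asIdeal.primeCompl M)
  -- every prime of `R'` containing the annihilator of `M'` is the maximal ideal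
  have hQ : ∀ Q : Ideal R', Q.IsPrime → Module.annihilator R' M' ≤ Q →
      Q = IsLocalRing.maximalIdeal R' := by
    intro Q hQp hQle
    set q := Q.comap (algebraMap A R') with hqdef
    haveI hqprime : q.IsPrime := Ideal.IsPrime.comap _
    have hqlep : q ≤ p.asIdeal := by
      intro a ha
      by_contra hnot
      exact hQp.ne_top (Ideal.eq_top_of_isUnit_mem _ ha
        (IsLocalization.map_units R' (⟨a, hnot⟩ : p.asIdeal.primeCompl)))
    have hannq : Module.annihilator A M ≤ q := by
      intro a ha
      rw [Module.mem_annihilator] at ha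
      show algebraMap A R' a ∈ Q
      apply hQle
      rw [Module.mem_annihilator]
      intro x
      induction x using LocalizedModule.induction_on with
      | _ mm s =>
        rw [algebraMap_smul, LocalizedModule.smul'_mk, ha, LocalizedModule.zero_mk]
    obtain ⟨q', hq'ass, hq'le⟩ := exists_associated_le M q hannq
    haveI : q'.IsPrime := hq'ass.isPrime
    have hq'p : q' ≤ p.asIdeal := hq'le.trans hqlep
    have hq'eq : q' = p.asIdeal := by
      by_contra hne
      have hlt : (⟨q', ‹q'.IsPrime›⟩ : PrimeSpectrum A) < p := by
        rw [← PrimeSpectrum.asIdeal_lt_asIdeal]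
        exact lt_of_le_of_ne hq'p hne
      have h1 : coht (⟨q', ‹q'.IsPrime›⟩ : PrimeSpectrum A) ≤ α :=
        hM ⟨q', ‹q'.IsPrime›⟩ hq'ass
      have h2 : coht p < coht (⟨q', ‹q'.IsPrime›⟩ : PrimeSpectrum A) := coht_lt_of_lt hlt
      have h3 := h2.trans_le h1
      rw [hp] at h3
      exact lt_irrefl α h3
    have hqp : q = p.asIdeal := le_antisymm hqlep (hq'eq ▸ hq'le)
    have hmap := IsLocalization.map_comap p.asIdeal.primeCompl R' Q
    rw [← hmap, Ideal.under_def, ← hqdef, hqp, Localization.AtPrime.map_eq_maximalIdeal]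
  -- hence the maximal ideal is contained in the radical of the annihilator
  have hm : IsLocalRing.maximalIdeal R' ≤ (Module.annihilator R' M').radical := by
    rw [Ideal.radical_eq_sInf]
    refine le_sInf ?_
    rintro Q ⟨hle, hprime⟩
    rw [hQ Q hprime hle]
  obtain ⟨n, hn⟩ := Ideal.exists_pow_le_of_le_radical_of_fg hm (IsNoetherian.noetherian _)
  have hsmul : (IsLocalRing.maximalIdeal R') ^ n • (⊤ : Submodule R' M') = ⊥ := by
    rw [eq_bot_iff]
    refine Submodule.smul_le.mpr fun r hr x _ => ?_
    rw [Submodule.mem_bot]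
    exact Module.mem_annihilator.mp (hn hr) x
  haveI : IsArtinian R' M' :=
    isArtinian_of_pow_maximal_smul_eq_bot (IsLocalRing.maximalIdeal R') n M' hsmul
  exact isFiniteLength_iff_isNoetherian_isArtinian.mpr ⟨inferInstance, inferInstance⟩
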